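/- Let Φ : ℝ^{4d} → ℝ^{4d} be a symplectic map for the extended form, and for each n define translations T_n(z) = z + c_n where c_n = (0, p_n - x_n, 0, q_n - y_n) maps the point (p_n, x_n, q_n, y_n) to (p_n, p_n, q_n, q_n). Then Ψ_n = T_{n+1} ∘ Φ ∘ T_n^{-1} is symplectic, and if Ψ_n maps (p_n,p_n,q_n,q_n) to (p_{n+1},p_{n+1},q_{n+1},q_{n+1}), the induced map (p_n,q_n) ↦ (p_{n+1},q_{n+1}) on ℝ^{2d} is symplectic. -/

import Mathlib

open scoped BigOperators

/-- Vectors in `ℝ^d`. -/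
abbrev V (d : ℕ) := Fin d → ℝ

/-- The standard symplectic form `dp ∧ dq` on `ℝ^{2d}`, coordinates `(p, q)`. -/
def ω2 (d : ℕ) (u v : V d × V d) : ℝ :=
  ∑ i, (u.1 i * v.2 i - u.2 i * v.1 i)

/-- The extended symplectic form `dp ∧ dq + dx ∧ dy` on `ℝ^{4d}`,
coordinates ordered `(p, x, q, y)`. -/
def ω4 (d : ℕ) (u v : V d × V d × V d × V d) : ℝ :=
  ∑ i, (u.1 i * v.2.2.1 i - u.2.2.1 i * v.1 i) +
    ∑ i, (u.2.1 i * v.2.2.2 i - u.2.2.2 i * v.2.1 i)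

/-- Theorem 6 of the paper: conjugating a symplectic extended phase space map
`Φ` by the translations `T_n : z ↦ z + (0, pₙ - xₙ, 0, qₙ - yₙ)` gives a
symplectic map `Ψₙ = T_{n+1} ∘ Φ ∘ Tₙ⁻¹`; if `Ψₙ` maps the diagonal into the
diagonal, sending `(pₙ,pₙ,qₙ,qₙ)` to `(p_{n+1},p_{n+1},q_{n+1},q_{n+1})`, the
induced map `(pₙ,qₙ) ↦ (p_{n+1},q_{n+1})` on the original phase space is
symplectic. -/
theorem stmt14 (d : ℕ)
    (Φ : V d × V d × V d × V d → V d × V d × V d × V d)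
    (hΦdiff : Differentiable ℝ Φ)
    (hΦsymp : ∀ z u v, ω4 d (fderiv ℝ Φ z u) (fderiv ℝ Φ z v) = ω4 d u v)
    (p x q y : ℕ → V d) (n : ℕ)
    (Ψ : V d × V d × V d × V d → V d × V d × V d × V d)
    (hΨ : Ψ = fun z =>
      Φ (z - (0, p n - x n, 0, q n - y n)) +
        (0, p (n + 1) - x (n + 1), 0, q (n + 1) - y (n + 1)))
    (hstep : Ψ (p n, p n, q n, q n) = (p (n + 1), p (n + 1), q (n + 1), q (n + 1)))
    (Φt : V d × V d → V d × V d) (hΦtdiff : Differentiable ℝ Φt)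
    (hdiag : ∀ a b : V d,
      Ψ (a, a, b, b) = ((Φt (a, b)).1, (Φt (a, b)).1, (Φt (a, b)).2, (Φt (a, b)).2)) :
    (∀ z u v, ω4 d (fderiv ℝ Ψ z u) (fderiv ℝ Ψ z v) = ω4 d u v) ∧
    (∀ z u v, ω2 d (fderiv ℝ Φt z u) (fderiv ℝ Φt z v) = ω2 d u v) ∧
    Φt (p n, q n) = (p (n + 1), q (n + 1)) := by
  subst hΨ
  have hD : ∀ z : V d × V d × V d × V d,
      fderiv ℝ (fun z => Φ (z - (0, p n - x n, 0, q n - y n)) +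
        (0, p (n + 1) - x (n + 1), 0, q (n + 1) - y (n + 1))) z
      = fderiv ℝ Φ (z - (0, p n - x n, 0, q n - y n)) := by
    intro z
    have h : HasFDerivAt (fun w => Φ (w - (0, p n - x n, 0, q n - y n)))
        (fderiv ℝ Φ (z - (0, p n - x n, 0, q n - y n))) z := by
      have := (hΦdiff (z - (0, p n - x n, 0, q n - y n))).hasFDerivAt.comp z
        ((hasFDerivAt_id z).sub_const (0, p n - x n, 0, q n - y n))
      simpa [Function.comp_def] using this
    have h2 := h.add_const (0, p (n + 1) - x (n + 1), 0, q (n + 1) - y (n + 1))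
    exact h2.fderiv
  have hΨdiff : Differentiable ℝ (fun z => Φ (z - (0, p n - x n, 0, q n - y n)) +
      (0, p (n + 1) - x (n + 1), 0, q (n + 1) - y (n + 1))) :=
    (hΦdiff.comp (differentiable_id.sub_const _)).add_const _
  have hΨsymp : ∀ z u v, ω4 d (fderiv ℝ (fun z => Φ (z - (0, p n - x n, 0, q n - y n)) +
      (0, p (n + 1) - x (n + 1), 0, q (n + 1) - y (n + 1))) z u)
      (fderiv ℝ (fun z => Φ (z - (0, p n - x n, 0, q n - y n)) +
      (0, p (n + 1) - x (n + 1), 0, q (n + 1) - y (n + 1))) z v) = ω4 d u v := by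
    intro z u v
    rw [hD]
    exact hΦsymp _ u v
  refine ⟨hΨsymp, ?_, ?_⟩
  · set ι : (V d × V d) →L[ℝ] (V d × V d × V d × V d) :=
      (ContinuousLinearMap.fst ℝ (V d) (V d)).prod
        ((ContinuousLinearMap.fst ℝ (V d) (V d)).prod
          ((ContinuousLinearMap.snd ℝ (V d) (V d)).prod
            (ContinuousLinearMap.snd ℝ (V d) (V d)))) with hι
    have hιapp : ∀ w : V d × V d, ι w = (w.1, w.1, w.2, w.2) := fun w => rfl
    set Ψ := fun z => Φ (z - (0, p n - x n, 0, q n - y n)) +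
      (0, p (n + 1) - x (n + 1), 0, q (n + 1) - y (n + 1)) with hΨdef
    have key : ∀ z u, fderiv ℝ Ψ (ι z) (ι u) = ι (fderiv ℝ Φt z u) := by
      intro z u
      have h1 : HasFDerivAt (fun w => Ψ (ι w)) ((fderiv ℝ Ψ (ι z)).comp ι) z :=
        ((hΨdiff (ι z)).hasFDerivAt).comp z ι.hasFDerivAt
      have h2 : HasFDerivAt (fun w => ι (Φt w)) (ι.comp (fderiv ℝ Φt z)) z :=
        ι.hasFDerivAt.comp z (hΦtdiff z).hasFDerivAt
      have heq : (fun w : V d × V d => Ψ (ι w)) = fun w => ι (Φt w) := by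
        funext w
        rw [hιapp, hιapp]
        exact hdiag w.1 w.2
      rw [heq] at h1
      exact DFunLike.congr_fun (h1.unique h2) u
    have hform : ∀ a b : V d × V d,
        ω4 d (a.1, a.1, a.2, a.2) (b.1, b.1, b.2, b.2) = 2 * ω2 d a b := by
      intro a b
      simp only [ω4, ω2]
      ring
    intro z u v
    have h := hΨsymp (ι z) (ι u) (ι v)
    rw [key z u, key z v, hιapp, hιapp, hιapp, hιapp, hform, hform] at h
    linarith
  · have h := (hdiag (p n) (q n)).symm.trans hstep
    exact Prod.ext_iff.mpr ⟨congrArg (fun w : V d × V d × V d × V d => w.1) h, congrArg (fun w : V d × V d × V d × V d => w.2.2.2) h⟩
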